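/- Let a, b be positive integers. Then the tensor product of finite fields F_{2^a} ⊗_{F₂} F_{2^b} is isomorphic as an F₂-algebra to the product of gcd(a, b) copies of the finite field F_{2^{lcm(a,b)}}. -/

import Mathlib

open scoped TensorProduct
open Polynomial

section Aux

variable (a b : ℕ)

private theorem stmt12_aux_fix (m : ℕ) (hm : a ∣ m) (hbm : b ∣ m) (ha : 0 < a) (hb : 0 < b)
    (hchar : CharP (GaloisField 2 a ⊗[ZMod 2] GaloisField 2 b) 2)
    (t : GaloisField 2 a ⊗[ZMod 2] GaloisField 2 b) : t ^ (2 ^ m) = t := by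
  haveI := Fintype.ofFinite (GaloisField 2 a)
  haveI := Fintype.ofFinite (GaloisField 2 b)
  have hx : ∀ x : GaloisField 2 a, x ^ (2 ^ m) = x := by
    intro x
    obtain ⟨c, rfl⟩ := hm
    have hcard : Fintype.card (GaloisField 2 a) = 2 ^ a := by
      rw [← Nat.card_eq_fintype_card, GaloisField.card 2 a ha.ne']
    have := FiniteField.pow_card_pow c x
    rwa [hcard, ← pow_mul] at this
  have hy : ∀ y : GaloisField 2 b, y ^ (2 ^ m) = y := by
    intro y
    obtain ⟨c, rfl⟩ := hbm
    have hcard : Fintype.card (GaloisField 2 b) = 2 ^ b := by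
      rw [← Nat.card_eq_fintype_card, GaloisField.card 2 b hb.ne']
    have := FiniteField.pow_card_pow c y
    rwa [hcard, ← pow_mul] at this
  induction t using TensorProduct.induction_on with
  | zero => exact zero_pow (by positivity)
  | tmul x y => rw [Algebra.TensorProduct.tmul_pow, hx, hy]
  | add u v hu hv => rw [add_pow_char_pow, hu, hv]

private theorem stmt12_aux_card (ha : 0 < a) (hb : 0 < b)
    (I : Ideal (GaloisField 2 a ⊗[ZMod 2] GaloisField 2 b)) (hI : I.IsMaximal)
    (hfix : ∀ t : GaloisField 2 a ⊗[ZMod 2] GaloisField 2 b, t ^ (2 ^ (Nat.lcm a b)) = t) :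
    Nat.card ((GaloisField 2 a ⊗[ZMod 2] GaloisField 2 b) ⧸ I) = 2 ^ (Nat.lcm a b) := by
  set T := GaloisField 2 a ⊗[ZMod 2] GaloisField 2 b with hT
  set m := Nat.lcm a b with hmdef
  have hm0 : m ≠ 0 := Nat.lcm_ne_zero ha.ne' hb.ne'
  haveI : Finite T := Module.finite_of_finite (ZMod 2)
  letI : Field (T ⧸ I) := Ideal.Quotient.field I
  haveI : Finite (T ⧸ I) := Quotient.finite _
  haveI := Fintype.ofFinite (T ⧸ I)
  have hdvd : ∀ (c : ℕ), 0 < c → ∀ (ρ : GaloisField 2 c →+* (T ⧸ I)),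
      ∃ r : ℕ, Fintype.card (T ⧸ I) = 2 ^ (c * r) := by
    intro c hc ρ
    haveI := Fintype.ofFinite (GaloisField 2 c)
    letI : Algebra (GaloisField 2 c) (T ⧸ I) := ρ.toAlgebra
    haveI : Module.Finite (GaloisField 2 c) (T ⧸ I) := Module.Finite.of_finite
    refine ⟨Module.finrank (GaloisField 2 c) (T ⧸ I), ?_⟩
    have hcard : Fintype.card (GaloisField 2 c) = 2 ^ c := by
      rw [← Nat.card_eq_fintype_card, GaloisField.card 2 c hc.ne']
    rw [Module.card_eq_pow_finrank (K := GaloisField 2 c) (V := T ⧸ I), hcard, ← pow_mul]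
  obtain ⟨r, hr⟩ := hdvd a ha ((Ideal.Quotient.mk I).comp
    (Algebra.TensorProduct.includeLeft (S := ZMod 2)).toRingHom)
  obtain ⟨s, hs⟩ := hdvd b hb ((Ideal.Quotient.mk I).comp
    (Algebra.TensorProduct.includeRight).toRingHom)
  have har_bs : a * r = b * s := by
    rw [hr] at hs; exact Nat.pow_right_injective le_rfl hs
  have hmdvd : m ∣ a * r := Nat.lcm_dvd ⟨r, rfl⟩ ⟨s, har_bs⟩
  have hfixQ : ∀ z : T ⧸ I, z ^ (2 ^ m) = z := by
    intro z
    obtain ⟨t, rfl⟩ := Ideal.Quotient.mk_surjective z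
    rw [← map_pow, hfix t]
  have hub : Fintype.card (T ⧸ I) ≤ 2 ^ m := by
    classical
    set q : (T ⧸ I)[X] := X ^ (2 ^ m) - X with hq
    have hdeg : q.natDegree = 2 ^ m :=
      FiniteField.X_pow_card_sub_X_natDegree_eq _ (Nat.one_lt_two_pow hm0)
    have hq0 : q ≠ 0 := fun h => by
      rw [h, natDegree_zero] at hdeg; exact absurd hdeg.symm (Nat.two_pow_pos m).ne'
    have hsub : (Finset.univ : Finset (T ⧸ I)) ⊆ q.roots.toFinset := by
      intro z _
      rw [Multiset.mem_toFinset, mem_roots hq0]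
      simp [hq, sub_eq_zero, hfixQ z]
    calc Fintype.card (T ⧸ I) = (Finset.univ : Finset (T ⧸ I)).card := rfl
      _ ≤ q.roots.toFinset.card := Finset.card_le_card hsub
      _ ≤ Multiset.card q.roots := Multiset.toFinset_card_le _
      _ ≤ q.natDegree := q.card_roots'
      _ = 2 ^ m := hdeg
  have hle : a * r ≤ m := by
    rw [hr] at hub
    exact Nat.pow_le_pow_iff_right one_lt_two |>.mp hub
  have hge : m ≤ a * r := Nat.le_of_dvd (by
    rcases Nat.eq_zero_or_pos (a * r) with h | h
    · exfalso; rw [h, pow_zero] at hr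
      exact Fintype.one_lt_card.ne' hr
    · exact h) hmdvd
  rw [Nat.card_eq_fintype_card, hr, Nat.le_antisymm hle hge]

end Aux

/-- `F_{2^a} ⊗_{F₂} F_{2^b}` is isomorphic as an `F₂`-algebra to the product of
`gcd(a, b)` copies of `F_{2^{lcm(a, b)}}`. -/
theorem stmt12 (a b : ℕ) (ha : 0 < a) (hb : 0 < b) :
    Nonempty ((GaloisField 2 a ⊗[ZMod 2] GaloisField 2 b) ≃ₐ[ZMod 2]
      (Fin (Nat.gcd a b) → GaloisField 2 (Nat.lcm a b))) := by
  classical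
  set T := GaloisField 2 a ⊗[ZMod 2] GaloisField 2 b with hT
  set m := Nat.lcm a b with hmdef
  have hm0 : m ≠ 0 := Nat.lcm_ne_zero ha.ne' hb.ne'
  haveI hfinT : Finite T := Module.finite_of_finite (ZMod 2)
  haveI := Fintype.ofFinite T
  have hfr : Module.finrank (ZMod 2) T = a * b := by
    show Module.finrank (ZMod 2) (GaloisField 2 a ⊗[ZMod 2] GaloisField 2 b) = a * b
    rw [Module.finrank_tensorProduct, GaloisField.finrank 2 ha.ne',
      GaloisField.finrank 2 hb.ne']
  haveI hnt : Nontrivial T := by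
    have := Module.finrank_pos_iff (R := ZMod 2) (M := T)
    rw [hfr] at this
    exact this.mp (Nat.mul_pos ha hb)
  haveI hchar : CharP T 2 := charP_of_injective_algebraMap
    (algebraMap (ZMod 2) T).injective 2
  -- reduced
  haveI hred : IsReduced T := by
    have hsurj : Function.Surjective (frobenius T 2) := by
      intro z
      induction z using TensorProduct.induction_on with
      | zero => exact ⟨0, by simp [frobenius_def]⟩
      | tmul x y =>
          obtain ⟨x', hx⟩ := surjective_frobenius (GaloisField 2 a) 2 x
          obtain ⟨y', hy⟩ := surjective_frobenius (GaloisField 2 b) 2 y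
          refine ⟨x' ⊗ₜ y', ?_⟩
          rw [frobenius_def, Algebra.TensorProduct.tmul_pow, ← frobenius_def, ← frobenius_def,
            hx, hy]
      | add u v hu hv =>
          obtain ⟨u', hu⟩ := hu; obtain ⟨v', hv⟩ := hv
          exact ⟨u' + v', by simp only [map_add, hu, hv]⟩
    have hinj : Function.Injective (frobenius T 2) :=
      Finite.injective_iff_surjective.mpr hsurj
    constructor
    intro x hx
    obtain ⟨n, hn⟩ := hx
    have h2 : x ^ (2 ^ n) = 0 := by
      have hle : n ≤ 2 ^ n := (Nat.lt_pow_self (n := n) one_lt_two).le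
      calc x ^ (2 ^ n) = x ^ n * x ^ (2 ^ n - n) := by rw [← pow_add, Nat.add_sub_cancel' hle]
      _ = 0 := by rw [hn, zero_mul]
    refine hinj.iterate n ?_
    rw [iterate_frobenius, h2]
    simp
  haveI hart : IsArtinianRing T := inferInstance
  -- the maximal spectrum is finite
  haveI : Finite (Ideal T) :=
    Finite.of_injective (fun I : Ideal T => (I : Set T)) (fun _ _ h => by
      exact SetLike.coe_injective h)
  haveI : Fintype {I : Ideal T | I.IsMaximal} := Fintype.ofFinite _
  have hfix : ∀ t : T, t ^ (2 ^ m) = t :=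
    stmt12_aux_fix a b m (Nat.dvd_lcm_left a b) (Nat.dvd_lcm_right a b) ha hb hchar
  -- equivalences of each factor
  letI : ∀ I : {I : Ideal T | I.IsMaximal}, Field (T ⧸ I.1) :=
    fun I => @Ideal.Quotient.field T _ I.1 I.2
  have e2 : ∀ I : {I : Ideal T | I.IsMaximal}, (T ⧸ I.1) ≃+* GaloisField 2 m := by
    intro I
    haveI : Finite (T ⧸ I.1) := Quotient.finite _
    exact (GaloisField.algEquivGaloisField 2 m (stmt12_aux_card a b ha hb I.1 I.2 hfix)).toRingEquiv
  -- the big ring equiv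
  have e1 : T ≃+* ∀ I : {I : Ideal T | I.IsMaximal}, T ⧸ I.1 :=
    (IsArtinianRing.equivPi T).toRingEquiv.trans (RingEquiv.piCongrLeft'
      (fun I : MaximalSpectrum T => T ⧸ I.asIdeal)
      (⟨fun I => ⟨I.asIdeal, I.isMaximal⟩, fun I => ⟨I.1, I.2⟩, fun _ => rfl, fun _ => rfl⟩ :
        MaximalSpectrum T ≃ {I : Ideal T | I.IsMaximal}))
  have e3 : T ≃+* ({I : Ideal T | I.IsMaximal} → GaloisField 2 m) :=
    e1.trans (RingEquiv.piCongrRight e2)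
  -- count the maximal ideals
  haveI := Fintype.ofFinite (GaloisField 2 m)
  have hcardT : Fintype.card T = 2 ^ (a * b) := by
    rw [Module.card_eq_pow_finrank (K := ZMod 2) (V := T), ZMod.card, hfr]
  have hcount : Fintype.card {I : Ideal T | I.IsMaximal} = Nat.gcd a b := by
    have hc : (2 : ℕ) ^ (a * b) = (2 ^ m) ^ Fintype.card {I : Ideal T | I.IsMaximal} := by
      rw [← hcardT]
      have := Nat.card_eq_of_bijective e3 e3.bijective
      rw [Nat.card_eq_fintype_card, Nat.card_eq_fintype_card] at this
      rw [this, Fintype.card_pi]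
      have : ∀ I : {I : Ideal T | I.IsMaximal}, Fintype.card (GaloisField 2 m) = 2 ^ m := by
        intro I
        rw [← Nat.card_eq_fintype_card, GaloisField.card 2 m hm0]
      rw [Finset.prod_congr rfl (fun I _ => this I), Finset.prod_const, Finset.card_univ]
    rw [← pow_mul] at hc
    have h1 : a * b = m * Fintype.card {I : Ideal T | I.IsMaximal} :=
      Nat.pow_right_injective le_rfl hc
    have h2 : Nat.gcd a b * m = a * b := Nat.gcd_mul_lcm a b
    have hmpos : 0 < m := Nat.pos_of_ne_zero hm0
    apply Nat.eq_of_mul_eq_mul_left hmpos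
    rw [← h1, ← h2, Nat.mul_comm]
  -- reindex
  have σ : {I : Ideal T | I.IsMaximal} ≃ Fin (Nat.gcd a b) :=
    Fintype.equivFinOfCardEq hcount
  have e4 : T ≃+* (Fin (Nat.gcd a b) → GaloisField 2 m) :=
    e3.trans (RingEquiv.piCongrLeft' (fun _ => GaloisField 2 m) σ)
  -- upgrade to AlgEquiv
  refine ⟨AlgEquiv.ofRingEquiv (f := e4) ?_⟩
  intro r
  exact RingHom.congr_fun (Subsingleton.elim
    ((e4 : T →+* (Fin (Nat.gcd a b) → GaloisField 2 m)).comp (algebraMap (ZMod 2) T))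
    (algebraMap (ZMod 2) (Fin (Nat.gcd a b) → GaloisField 2 m))) r
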